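/- In the BEBA model on a connected graph with two initial opinion values y_0 > 0 and -y_0, self-weight w_ii = 1, and entrenchment β = 1/y_0^2, every node's opinion is constant in time: y_i(t) = y_i(0) for all t ≥ 0 (persistent disagreement). -/

import Mathlib

/-- BEBA on a connected graph with two initial opinion values `y₀ > 0` and
`-y₀`, self-weight `w_ii = 1`, and entrenchment `β = 1/y₀^2`: every node's
opinion is constant in time (persistent disagreement). -/
theorem stmt_17 {V : Type*} [Fintype V] (G : SimpleGraph V) [DecidableRel G.Adj]
    (hconn : G.Connected)
    (y0 : ℝ) (hy0 : 0 < y0) (hy0' : y0 < 1)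
    (β : ℝ) (hβ : β = 1 / y0 ^ 2)
    (y : ℕ → V → ℝ)
    (hinit : ∀ i, y 0 i = y0 ∨ y 0 i = -y0)
    (hupd : ∀ t i, y (t + 1) i =
      (y t i + ∑ j ∈ G.neighborFinset i, (β * y t i * y t j + 1) * y t j) /
      (1 + ∑ j ∈ G.neighborFinset i, (β * y t i * y t j + 1))) :
    ∀ t i, y t i = y 0 i := by
  have hy0ne : y0 ≠ 0 := ne_of_gt hy0
  intro t
  induction t with
  | zero => intro i; rfl
  | succ t ih =>
    intro i
    have hv : ∀ j, y t j = y0 ∨ y t j = -y0 := fun j => (ih j) ▸ hinit j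
    rw [hupd t i]
    have hterm : ∀ j ∈ G.neighborFinset i,
        (β * y t i * y t j + 1) * y t j = (β * y t i * y t j + 1) * y t i := by
      intro j _
      rcases hv i with hi | hi <;> rcases hv j with hj | hj <;>
        rw [hi, hj, hβ] <;> field_simp <;> ring_nf
    have hnn : ∀ j ∈ G.neighborFinset i, (0:ℝ) ≤ β * y t i * y t j + 1 := by
      intro j _
      rcases hv i with hi | hi <;> rcases hv j with hj | hj <;>
        rw [hi, hj, hβ] <;> ring_nf <;> simp [mul_inv_cancel₀ (pow_ne_zero 2 hy0ne)] <;> positivity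
    have hd : (0:ℝ) < 1 + ∑ j ∈ G.neighborFinset i, (β * y t i * y t j + 1) := by
      have := Finset.sum_nonneg hnn
      linarith
    rw [Finset.sum_congr rfl hterm, ← Finset.sum_mul]
    have heq : y t i + (∑ j ∈ G.neighborFinset i, (β * y t i * y t j + 1)) * y t i
        = (1 + ∑ j ∈ G.neighborFinset i, (β * y t i * y t j + 1)) * y t i := by ring
    rw [heq, mul_div_cancel_left₀ _ (ne_of_gt hd), ih i]
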